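/- Let N ≥ 1 be an integer, y ∈ ℝ^N with y ≥ 0 componentwise, σ := (1/N)Σ_i y_i, and ζ ≥ 0, ξ ≥ 0 reals. Define A(y) := 2(σ+ζ)𝟏𝟏ᵀ + (ξ/N)(y𝟏ᵀ + 𝟏yᵀ) and γ_± := N(σ+ζ) ± √(N²(σ+ζ)² + 2Nξ(σ+ζ)σ + ξ²‖y‖²/N). Then A(y)·(ξy + γ_+ 𝟏) = (ξσ + γ_+)(ξy + γ_+ 𝟏) and A(y)·(ξy + γ_− 𝟏) = (ξσ + γ_−)(ξy + γ_− 𝟏); that is, ξy + γ_± 𝟏 are eigenvectors of A(y) with eigenvalues ξσ + γ_± respectively. -/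

import Mathlib

/-- The vectors `ξy + γ_± 𝟏` are eigenvectors of
`A(y) = 2(σ+ζ)𝟏𝟏ᵀ + (ξ/N)(y𝟏ᵀ + 𝟏yᵀ)` with eigenvalues `ξσ + γ_±`. -/
theorem stmt_3 (N : ℕ) (hN : 1 ≤ N) (y : Fin N → ℝ) (hy : ∀ i, 0 ≤ y i)
    (ζ ξ : ℝ) (hζ : 0 ≤ ζ) (hξ : 0 ≤ ξ) :
    ((Matrix.of fun i j : Fin N =>
        2 * ((∑ k, y k) / N + ζ) + (ξ / N) * (y i + y j)).mulVec
      (fun i => ξ * y i +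
        (N * ((∑ k, y k) / N + ζ) +
          Real.sqrt ((N : ℝ) ^ 2 * ((∑ k, y k) / N + ζ) ^ 2 +
            2 * N * ξ * ((∑ k, y k) / N + ζ) * ((∑ k, y k) / N) +
            ξ ^ 2 * (∑ k, (y k) ^ 2) / N)))
      = (ξ * ((∑ k, y k) / N) +
          (N * ((∑ k, y k) / N + ζ) +
            Real.sqrt ((N : ℝ) ^ 2 * ((∑ k, y k) / N + ζ) ^ 2 +
              2 * N * ξ * ((∑ k, y k) / N + ζ) * ((∑ k, y k) / N) +
              ξ ^ 2 * (∑ k, (y k) ^ 2) / N))) •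
        (fun i => ξ * y i +
          (N * ((∑ k, y k) / N + ζ) +
            Real.sqrt ((N : ℝ) ^ 2 * ((∑ k, y k) / N + ζ) ^ 2 +
              2 * N * ξ * ((∑ k, y k) / N + ζ) * ((∑ k, y k) / N) +
              ξ ^ 2 * (∑ k, (y k) ^ 2) / N)))) ∧
    ((Matrix.of fun i j : Fin N =>
        2 * ((∑ k, y k) / N + ζ) + (ξ / N) * (y i + y j)).mulVec
      (fun i => ξ * y i +
        (N * ((∑ k, y k) / N + ζ) -
          Real.sqrt ((N : ℝ) ^ 2 * ((∑ k, y k) / N + ζ) ^ 2 +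
            2 * N * ξ * ((∑ k, y k) / N + ζ) * ((∑ k, y k) / N) +
            ξ ^ 2 * (∑ k, (y k) ^ 2) / N)))
      = (ξ * ((∑ k, y k) / N) +
          (N * ((∑ k, y k) / N + ζ) -
            Real.sqrt ((N : ℝ) ^ 2 * ((∑ k, y k) / N + ζ) ^ 2 +
              2 * N * ξ * ((∑ k, y k) / N + ζ) * ((∑ k, y k) / N) +
              ξ ^ 2 * (∑ k, (y k) ^ 2) / N))) •
        (fun i => ξ * y i +
          (N * ((∑ k, y k) / N + ζ) -
            Real.sqrt ((N : ℝ) ^ 2 * ((∑ k, y k) / N + ζ) ^ 2 +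
              2 * N * ξ * ((∑ k, y k) / N + ζ) * ((∑ k, y k) / N) +
              ξ ^ 2 * (∑ k, (y k) ^ 2) / N)))) := by
  have hNpos : (0:ℝ) < N := by exact_mod_cast hN
  have hN0 : (N:ℝ) ≠ 0 := ne_of_gt hNpos
  set S := ∑ k, y k with hSdef
  set Q := ∑ k, (y k) ^ 2 with hQdef
  have hS0 : 0 ≤ S := Finset.sum_nonneg fun i _ => hy i
  set σ := S / (N:ℝ) with hσdef
  have hσ0 : 0 ≤ σ := div_nonneg hS0 hNpos.le
  have hQ0 : 0 ≤ Q := Finset.sum_nonneg fun i _ => sq_nonneg _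
  have hD : (0:ℝ) ≤ (N : ℝ) ^ 2 * (σ + ζ) ^ 2 + 2 * N * ξ * (σ + ζ) * σ
      + ξ ^ 2 * Q / N := by
    have h1 : (0:ℝ) ≤ (N : ℝ) ^ 2 * (σ + ζ) ^ 2 := by positivity
    have h2 : (0:ℝ) ≤ 2 * N * ξ * (σ + ζ) * σ := by positivity
    have h3 : (0:ℝ) ≤ ξ ^ 2 * Q / ↑N := by positivity
    linarith
  set D := (N : ℝ) ^ 2 * (σ + ζ) ^ 2 + 2 * N * ξ * (σ + ζ) * σ + ξ ^ 2 * Q / N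
    with hDdef
  set r := Real.sqrt D with hrdef
  have hr2 : r ^ 2 = D := Real.sq_sqrt hD
  have hSN : S = N * σ := by rw [hσdef]; field_simp
  have hr2'' : r ^ 2 * N = (N:ℝ)^3*(σ+ζ)^2 + 2*N^2*ξ*(σ+ζ)*σ + ξ^2*Q := by
    rw [hr2, hDdef]
    field_simp
  have key : ∀ γ : ℝ,
      (N:ℝ) * γ ^ 2 = 2 * (S + ζ * N) * (N * γ + ξ * S) + ξ ^ 2 * Q →
      (Matrix.of fun i j : Fin N => 2 * (σ + ζ) + (ξ / N) * (y i + y j)).mulVec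
        (fun i => ξ * y i + γ) = (ξ * σ + γ) • (fun i => ξ * y i + γ) := by
    intro γ hγ
    funext i
    simp only [Matrix.mulVec, Matrix.of_apply, dotProduct, Pi.smul_apply,
      smul_eq_mul]
    have expand : ∀ j, (2 * (σ + ζ) + (ξ / N) * (y i + y j)) * (ξ * y j + γ)
        = (2*(σ+ζ)*ξ + ξ^2/N * y i + ξ/N*γ) * y j + (ξ^2/N) * (y j)^2
          + (2*(σ+ζ)*γ + ξ/N * y i * γ) := by intro j; ring
    rw [Finset.sum_congr rfl fun j _ => expand j]
    rw [Finset.sum_add_distrib, Finset.sum_add_distrib, ← Finset.mul_sum,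
      ← Finset.mul_sum, Finset.sum_const, Finset.card_univ, Fintype.card_fin,
      nsmul_eq_mul, ← hSdef, ← hQdef]
    rw [hσdef]
    field_simp
    linear_combination (-(1:ℝ)) * hγ
  constructor
  · refine key _ ?_
    rw [hSN]
    linear_combination hr2''
  · refine key _ ?_
    rw [hSN]
    linear_combination hr2''
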